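/- Let T > 0, let f : ℝ → ℝ be continuous on [0,T] with f(t) > 0 for all t ∈ [0,T], let m ∈ ℝ, δ > 0, set L = ∫₀ᵀ dτ/f(τ) and α = tanh(m/δ), and assume δ ≠ 2/L. Then the following are equivalent: (i) there exist differentiable functions u, w : ℝ → ℝ on [0,T], not both identically zero on [0,T], satisfying u'(t) = (m/f(t)) u(t) and w'(t) = −(m/f(t)) w(t) on [0,T] together with the regularized endpoint conditions (1 + α)u(0) + (1 − α)w(0) = 0 and (1 − α)u(T) + (1 + α)w(T) = 0; (ii) m = 0. That is, zero modes of the regularized APS-type family occur exactly at the boundary zeros m = k + A(s) = 0. -/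

import Mathlib

open Set intervalIntegral

/-- **Zero modes of the regularized APS-type family occur exactly at the
boundary zeros.** With `L = ∫₀ᵀ dτ/f(τ)`, `α = tanh(m/δ)` and the
nondegeneracy assumption `δ ≠ 2/L`, there exists a nontrivial solution of
the zero-mode system `u' = (m/f)u`, `w' = −(m/f)w` on `[0,T]` satisfying
the regularized endpoint conditions
`(1+α)u(0) + (1−α)w(0) = 0` and `(1−α)u(T) + (1+α)w(T) = 0`
if and only if `m = 0`. -/
theorem regularized_zero_mode_criterion
    (T : ℝ) (hT : 0 < T)
    (f : ℝ → ℝ)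
    (hfc : ContinuousOn f (Icc (0:ℝ) T))
    (hfpos : ∀ t ∈ Icc (0:ℝ) T, 0 < f t)
    (m δ : ℝ) (hδ : 0 < δ)
    (L : ℝ) (hL : L = ∫ τ in (0:ℝ)..T, 1 / f τ)
    (α : ℝ) (hα : α = Real.tanh (m / δ))
    (hnd : δ ≠ 2 / L) :
    (∃ u w : ℝ → ℝ,
        (∀ t ∈ Icc (0:ℝ) T, HasDerivAt u ((m / f t) * u t) t) ∧
        (∀ t ∈ Icc (0:ℝ) T, HasDerivAt w (-(m / f t) * w t) t) ∧
        ¬ (∀ t ∈ Icc (0:ℝ) T, u t = 0 ∧ w t = 0) ∧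
        (1 + α) * u 0 + (1 - α) * w 0 = 0 ∧
        (1 - α) * u T + (1 + α) * w T = 0)
    ↔ m = 0 := by
  constructor
  · rintro ⟨u, w, hu, hw, hnt, hb0, hbT⟩
    by_contra hm
    -- extend f to a continuous positive function on all of ℝ by clamping
    set F : ℝ → ℝ := fun t => f (max 0 (min t T)) with hFdef
    have hmem : ∀ t : ℝ, max 0 (min t T) ∈ Icc (0:ℝ) T := fun t =>
      ⟨le_max_left _ _, max_le hT.le (min_le_right _ _)⟩
    have hFc : Continuous F :=
      hfc.comp_continuous (continuous_const.max (continuous_id.min continuous_const)) hmem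
    have hFpos : ∀ t, 0 < F t := fun t => hfpos _ (hmem t)
    have hFeq : ∀ t ∈ Icc (0:ℝ) T, F t = f t := by
      intro t ht
      simp only [hFdef]
      rw [min_eq_left ht.2, max_eq_right ht.1]
    have hic : Continuous (fun τ => 1 / F τ) :=
      continuous_const.div hFc (fun t => (hFpos t).ne')
    set ℓ : ℝ → ℝ := fun t => ∫ τ in (0:ℝ)..t, 1 / F τ with hldef
    have hlderiv : ∀ t : ℝ, HasDerivAt ℓ (1 / F t) t := fun t =>
      (hic.integral_hasStrictDerivAt 0 t).hasDerivAt
    have hl0 : ℓ 0 = 0 := intervalIntegral.integral_same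
    have hlT : ℓ T = L := by
      rw [hL]
      exact intervalIntegral.integral_congr (fun t ht => by
        rw [uIcc_of_le hT.le] at ht
        rw [hFeq t ht])
    -- solution formulas via constancy of u·exp(-mℓ) and w·exp(mℓ)
    have formula : ∀ (v : ℝ → ℝ) (c : ℝ),
        (∀ t ∈ Icc (0:ℝ) T, HasDerivAt v ((c / f t) * v t) t) →
        ∀ t ∈ Icc (0:ℝ) T, v t = v 0 * Real.exp (c * ℓ t) := by
      intro v c hv t ht
      have hg : ∀ s ∈ Icc (0:ℝ) T,
          HasDerivAt (fun τ => v τ * Real.exp (-c * ℓ τ)) 0 s := by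
        intro s hs
        have h1 : HasDerivAt (fun τ => Real.exp (-c * ℓ τ))
            (Real.exp (-c * ℓ s) * (-c * (1 / F s))) s :=
          HasDerivAt.exp ((hlderiv s).const_mul (-c))
        have : HasDerivAt (fun τ => v τ * Real.exp (-c * ℓ τ)) _ s := (hv s hs).mul h1
        convert this using 1
        rw [hFeq s hs]
        have : f s ≠ 0 := (hfpos s hs).ne'
        field_simp
        ring
      have hgc : ContinuousOn (fun τ => v τ * Real.exp (-c * ℓ τ)) (Icc (0:ℝ) T) :=
        fun s hs => ((hg s hs).continuousAt).continuousWithinAt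
      have hconst := constant_of_has_deriv_right_zero hgc
        (fun s hs => ((hg s (Ico_subset_Icc_self hs)).hasDerivWithinAt)) t ht
      simp only [hl0, mul_zero, Real.exp_zero, mul_one] at hconst
      have h2 : v t * Real.exp (-c * ℓ t) * Real.exp (c * ℓ t)
          = v 0 * Real.exp (c * ℓ t) := by rw [hconst]
      rwa [mul_assoc, ← Real.exp_add, neg_mul, neg_add_cancel, Real.exp_zero, mul_one] at h2
    have hT' : T ∈ Icc (0:ℝ) T := ⟨hT.le, le_refl T⟩
    have h0' : (0:ℝ) ∈ Icc (0:ℝ) T := ⟨le_refl 0, hT.le⟩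
    have huf : ∀ t ∈ Icc (0:ℝ) T, u t = u 0 * Real.exp (m * ℓ t) :=
      formula u m hu
    have hwf : ∀ t ∈ Icc (0:ℝ) T, w t = w 0 * Real.exp (-m * ℓ t) := by
      have := formula w (-m) (fun t ht => by
        have := hw t ht
        convert this using 1
        ring)
      simpa using this
    -- set up the boundary linear system
    set x : ℝ := m / δ with hxdef
    have hcosh : Real.cosh x ≠ 0 := (Real.cosh_pos x).ne'
    have ha : 1 + α = Real.exp x / Real.cosh x := by
      rw [hα, Real.tanh_eq_sinh_div_cosh, ← Real.cosh_add_sinh]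
      field_simp
    have hb : 1 - α = Real.exp (-x) / Real.cosh x := by
      rw [hα, Real.tanh_eq_sinh_div_cosh, ← Real.cosh_sub_sinh]
      field_simp
    have huT : u T = u 0 * Real.exp (m * L) := by rw [huf T hT', hlT]
    have hwT : w T = w 0 * Real.exp (-m * L) := by rw [hwf T hT', hlT]
    rw [huT, hwT] at hbT
    -- determinant is nonzero
    have hD : (1 + α)^2 * Real.exp (-m * L) - (1 - α)^2 * Real.exp (m * L) ≠ 0 := by
      intro hzero
      have heq : (1 + α)^2 * Real.exp (-m * L) = (1 - α)^2 * Real.exp (m * L) := by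
        linarith
      rw [ha, hb] at heq
      have h2 : Real.exp (x + x + -(m * L)) = Real.exp (-x + -x + m * L) := by
        rw [Real.exp_add, Real.exp_add, Real.exp_add, Real.exp_add]
        field_simp at heq
        linear_combination heq
      have h3 : x + x + -(m * L) = -x + -x + m * L := Real.exp_injective h2
      have hx4 : 4 * x = 2 * (m * L) := by linarith
      have hLval : L = 2 / δ := by
        rw [hxdef] at hx4
        field_simp at hx4
        rcases mul_eq_mul_left_iff.mp (by linear_combination (-m/2) * hx4 : m * (L * δ) = m * 2) with h | h
        · field_simp; linarith
        · exact absurd h hm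
      apply hnd
      rw [hLval]
      field_simp
    -- solve the system: w 0 = 0 then u 0 = 0
    have hw0 : w 0 = 0 := by
      have hkey : w 0 * ((1 + α)^2 * Real.exp (-m * L) - (1 - α)^2 * Real.exp (m * L)) = 0 := by
        linear_combination (1 + α) * hbT - ((1 - α) * Real.exp (m * L)) * hb0
      exact (mul_eq_zero.mp hkey).resolve_right hD
    have hapos : 0 < 1 + α := by
      rw [ha]; positivity
    have hu0 : u 0 = 0 := by
      have : (1 + α) * u 0 = 0 := by rw [hw0] at hb0; linarith
      exact (mul_eq_zero.mp this).resolve_left hapos.ne'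
    exact hnt (fun t ht => ⟨by rw [huf t ht, hu0, zero_mul],
      by rw [hwf t ht, hw0, zero_mul]⟩)
  · intro hm
    subst hm
    have hα0 : α = 0 := by simp [hα]
    refine ⟨fun _ => 1, fun _ => -1, ?_, ?_, ?_, ?_, ?_⟩
    · intro t ht
      have : (0 / f t) * (1:ℝ) = 0 := by simp
      rw [this]
      exact hasDerivAt_const t 1
    · intro t ht
      have : -(0 / f t) * (-1:ℝ) = 0 := by simp
      rw [this]
      exact hasDerivAt_const t (-1)
    · intro h
      have := (h 0 ⟨le_refl 0, hT.le⟩).1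
      norm_num at this
    · rw [hα0]; ring
    · rw [hα0]; ring
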